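/- For fixed p, q in (0,1), the function f(x₁, x₂) = x₁·p + x₂·q − (x₁+x₂)·p^(x₁/(x₁+x₂))·q^(x₂/(x₁+x₂)) defined for x₁, x₂ > 0 is monotonically nondecreasing in x₁ (for each fixed x₂ > 0). -/

import Mathlib

private lemma key_exp (r : ℝ) : Real.exp r * (1 - r) ≤ 1 := by
  rcases le_or_gt (1 - r) 0 with h | h
  · have := mul_nonpos_of_nonneg_of_nonpos (Real.exp_nonneg r) h
    linarith
  · have h1 : 1 - r ≤ Real.exp (-r) := by
      have := Real.add_one_le_exp (-r); linarith
    calc Real.exp r * (1 - r) ≤ Real.exp r * Real.exp (-r) :=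
          mul_le_mul_of_nonneg_left h1 (Real.exp_nonneg r)
      _ = 1 := by rw [← Real.exp_add]; simp

theorem stmt_0 (p q : ℝ) (hp : p ∈ Set.Ioo (0:ℝ) 1) (hq : q ∈ Set.Ioo (0:ℝ) 1)
    (x₂ : ℝ) (hx₂ : 0 < x₂) (x₁ x₁' : ℝ) (hx₁ : 0 < x₁) (h : x₁ ≤ x₁') :
    x₁ * p + x₂ * q - (x₁ + x₂) * p ^ (x₁ / (x₁ + x₂)) * q ^ (x₂ / (x₁ + x₂))
      ≤ x₁' * p + x₂ * q - (x₁' + x₂) * p ^ (x₁' / (x₁' + x₂)) * q ^ (x₂ / (x₁' + x₂)) := by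
  obtain ⟨hp0, hp1⟩ := hp
  obtain ⟨hq0, hq1⟩ := hq
  set a := Real.log p with ha
  set b := Real.log q with hb
  set F : ℝ → ℝ := fun x => x * p + x₂ * q - (x + x₂) * Real.exp ((x * a + x₂ * b) / (x + x₂))
    with hF
  -- derivative of F at any x > 0
  have hderiv : ∀ x : ℝ, 0 < x → HasDerivAt F
      (p - Real.exp ((x * a + x₂ * b) / (x + x₂)) * (1 + x₂ * (a - b) / (x + x₂))) x := by
    intro x hx
    have hs : x + x₂ ≠ 0 := by positivity
    have h1 : HasDerivAt (fun x : ℝ => x * a + x₂ * b) a x := by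
      simpa using ((hasDerivAt_id x).mul_const a).add_const (x₂ * b)
    have h2 : HasDerivAt (fun x : ℝ => x + x₂) 1 x := (hasDerivAt_id x).add_const x₂
    have hu : HasDerivAt (fun x : ℝ => (x * a + x₂ * b) / (x + x₂))
        ((a * (x + x₂) - (x * a + x₂ * b) * 1) / (x + x₂) ^ 2) x := h1.div h2 hs
    have hexp := hu.exp
    have hg := h2.mul hexp
    have hlin : HasDerivAt (fun x : ℝ => x * p + x₂ * q) p x := by
      simpa using ((hasDerivAt_id x).mul_const p).add_const (x₂ * q)
    have := hlin.sub hg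
    refine this.congr_deriv ?_
    field_simp
    ring
  -- derivative is nonnegative for x > 0
  have hnonneg : ∀ x : ℝ, 0 < x →
      0 ≤ p - Real.exp ((x * a + x₂ * b) / (x + x₂)) * (1 + x₂ * (a - b) / (x + x₂)) := by
    intro x hx
    have hs : (0:ℝ) < x + x₂ := by positivity
    set r : ℝ := x₂ * (b - a) / (x + x₂) with hr
    have hu : (x * a + x₂ * b) / (x + x₂) = a + r := by
      rw [hr]; field_simp; ring
    have h2 : 1 + x₂ * (a - b) / (x + x₂) = 1 - r := by rw [hr]; ring_nf
    rw [hu, h2, Real.exp_add, Real.exp_log hp0]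
    have := key_exp r
    nlinarith [Real.exp_nonneg r, hp0]
  -- monotonicity on Ici x₁
  have hmono : MonotoneOn F (Set.Ici x₁) := by
    apply monotoneOn_of_deriv_nonneg (convex_Ici x₁)
    · intro x hx
      exact (hderiv x (lt_of_lt_of_le hx₁ hx)).continuousAt.continuousWithinAt
    · intro x hx
      rw [interior_Ici] at hx
      exact (hderiv x (lt_trans hx₁ hx)).differentiableAt.differentiableWithinAt
    · intro x hx
      rw [interior_Ici] at hx
      rw [(hderiv x (lt_trans hx₁ hx)).deriv]
      exact hnonneg x (lt_trans hx₁ hx)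
  have hFle : F x₁ ≤ F x₁' := hmono (Set.self_mem_Ici) h h
  -- rewrite original expression as F
  have hrw : ∀ x : ℝ, 0 < x →
      x * p + x₂ * q - (x + x₂) * p ^ (x / (x + x₂)) * q ^ (x₂ / (x + x₂)) = F x := by
    intro x hx
    have hs : x + x₂ ≠ 0 := by positivity
    rw [hF]
    simp only
    rw [Real.rpow_def_of_pos hp0, Real.rpow_def_of_pos hq0, mul_assoc, ← Real.exp_add]
    congr 2
    field_simp
    rw [ha, hb]
    congr 1
    ring
  rw [hrw x₁ hx₁, hrw x₁' (lt_of_lt_of_le hx₁ h)]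
  exact hFle
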